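/- Let n ≥ 1 be an integer, let t ∈ [0,1], let τ : [0,1] → ℝ be a measurable function, and let F₁,…,Fₙ : ℝ → [0,1] be nondecreasing functions. For each i set pᵢ := ∫₀ᵗ (1 − Fᵢ(τ(s))) ds, and set q := ∫₀ᵗ (1 − (∏_{i=1}^n Fᵢ(τ(s)))^{1/n}) ds. Then 1 − ∏_{i=1}^n (1 − pᵢ) ≤ 1 − (1 − q)ⁿ, i.e., (1 − q)ⁿ ≤ ∏_{i=1}^n (1 − pᵢ). -/

import Mathlib

open MeasureTheory
open scoped ENNReal NNReal
open scoped ENNReal NNReal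

/-- Hölder with an extra atom: key `ℝ≥0∞` inequality. -/
lemma aux_holder {n : ℕ} (hn : 1 ≤ n) {α : Type*} [MeasurableSpace α] (μ : Measure α)
    (c : ℝ≥0∞) (g : Fin n → α → ℝ≥0∞) (hg : ∀ i, Measurable (g i)) :
    c + ∫⁻ x, ∏ i, g i x ^ (1 / (n:ℝ)) ∂μ ≤
      ∏ i, (c + ∫⁻ x, g i x ∂μ) ^ (1 / (n:ℝ)) := by
  have hn0 : (n:ℝ) ≠ 0 := Nat.cast_ne_zero.mpr (by omega)
  -- extend the space with a point of mass `c`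
  set ν : Measure (α ⊕ Unit) := Measure.map Sum.inl μ + c • Measure.map Sum.inr (Measure.dirac ())
  set f : Fin n → (α ⊕ Unit) → ℝ≥0∞ := fun i x => Sum.elim (g i) (fun _ => 1) x with hf
  have hfm : ∀ i, Measurable (f i) := fun i => (hg i).sumElim measurable_const
  have key := ENNReal.lintegral_prod_norm_pow_le (μ := ν) Finset.univ
    (f := f) (fun i _ => (hfm i).aemeasurable) (p := fun _ => 1/(n:ℝ))
    (by rw [Finset.sum_const, Finset.card_univ, Fintype.card_fin, nsmul_eq_mul]; field_simp)
    (fun i _ => by positivity)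
  have hinl : Measurable (Sum.inl : α → α ⊕ Unit) := measurable_inl
  have hinr : Measurable (Sum.inr : Unit → α ⊕ Unit) := measurable_inr
  have lint : ∀ h : (α ⊕ Unit) → ℝ≥0∞, Measurable h →
      ∫⁻ x, h x ∂ν = (∫⁻ x, h (Sum.inl x) ∂μ) + c * h (Sum.inr ()) := by
    intro h hh
    rw [lintegral_add_measure, lintegral_smul_measure, lintegral_map hh hinl,
      lintegral_map hh hinr, lintegral_dirac, smul_eq_mul]
  have e1 : ∫⁻ x, ∏ i, f i x ^ (1/(n:ℝ)) ∂ν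
      = (∫⁻ x, ∏ i, g i x ^ (1/(n:ℝ)) ∂μ) + c := by
    rw [lint _ (by exact Finset.measurable_prod _ fun i _ => (hfm i).pow_const _)]
    simp [hf]
  have e2 : ∀ i, ∫⁻ x, f i x ∂ν = (∫⁻ x, g i x ∂μ) + c := by
    intro i; rw [lint _ (hfm i)]; simp [hf]
  calc c + ∫⁻ x, ∏ i, g i x ^ (1 / (n:ℝ)) ∂μ
      = ∫⁻ x, ∏ i, f i x ^ (1/(n:ℝ)) ∂ν := by rw [e1, add_comm]
    _ ≤ ∏ i, (∫⁻ x, f i x ∂ν) ^ (1/(n:ℝ)) := key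
    _ = ∏ i, (c + ∫⁻ x, g i x ∂μ) ^ (1 / (n:ℝ)) := by
        refine Finset.prod_congr rfl fun i _ => by rw [e2, add_comm]

/-- **Corollary 2.4.** Symmetrizing `n` rewards while preserving the distribution of their maximum
increases the probability of stopping before any time `t`. -/
theorem stmt2
    (n : ℕ) (hn : 1 ≤ n)
    (t : ℝ) (ht : t ∈ Set.Icc (0:ℝ) 1)
    (τ : ℝ → ℝ) (hτ : Measurable τ)
    (F : Fin n → ℝ → ℝ) (hFmono : ∀ i, Monotone (F i))
    (hF : ∀ i x, F i x ∈ Set.Icc (0:ℝ) 1)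
    (p : Fin n → ℝ) (q : ℝ)
    (hp : ∀ i, p i = ∫ s in (0:ℝ)..t, (1 - F i (τ s)))
    (hq : q = ∫ s in (0:ℝ)..t, (1 - (∏ i, F i (τ s)) ^ (1 / (n:ℝ)))) :
    (1 - q) ^ n ≤ ∏ i, (1 - p i) := by
  obtain ⟨h0t, ht1⟩ := ht
  have hn0 : (n:ℝ) ≠ 0 := Nat.cast_ne_zero.mpr (by omega)
  set G : ℝ → ℝ := fun s => (∏ i, F i (τ s)) ^ (1 / (n:ℝ)) with hG
  have hFim : ∀ i, Measurable fun s => F i (τ s) :=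
    fun i => ((hFmono i).measurable).comp hτ
  have hPm : Measurable fun s => ∏ i, F i (τ s) :=
    Finset.measurable_prod _ fun i _ => hFim i
  have hGm : Measurable G := (Real.continuous_rpow_const (by positivity : (0:ℝ) ≤ 1/(n:ℝ))).measurable.comp hPm
  have hF0 : ∀ i x, 0 ≤ F i x := fun i x => (hF i x).1
  have hF1 : ∀ i x, F i x ≤ 1 := fun i x => (hF i x).2
  have hP0 : ∀ s, 0 ≤ ∏ i, F i (τ s) :=
    fun s => Finset.prod_nonneg fun i _ => hF0 i _
  have hG0 : ∀ s, 0 ≤ G s := fun s => Real.rpow_nonneg (hP0 s) _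
  have hG1 : ∀ s, G s ≤ 1 := by
    intro s
    calc G s ≤ (1:ℝ) ^ (1/(n:ℝ)) := by
          apply Real.rpow_le_rpow (hP0 s) _ (by positivity)
          exact Finset.prod_le_one (fun i _ => hF0 i _) (fun i _ => hF1 i _)
      _ = 1 := Real.one_rpow _
  set S : Set ℝ := Set.Ioc (0:ℝ) t with hS
  have hSfin : volume S ≠ ⊤ := by
    simp [hS, Real.volume_Ioc]
  have hbdd : ∀ (f : ℝ → ℝ), (∀ x, 0 ≤ f x) → (∀ x, f x ≤ 1) → Measurable f →
      IntegrableOn f S := by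
    intro f h0 h1 hm
    refine Measure.integrableOn_of_bounded (M := 1) hSfin hm.aestronglyMeasurable ?_
    filter_upwards with x
    rw [Real.norm_eq_abs, abs_of_nonneg (h0 x)]; exact h1 x
  have hintF : ∀ i, IntegrableOn (fun s => F i (τ s)) S :=
    fun i => hbdd _ (fun x => hF0 i _) (fun x => hF1 i _) (hFim i)
  have hintG : IntegrableOn G S := hbdd _ hG0 hG1 hGm
  have hvolS : ∫ _ in S, (1:ℝ) = t := by
    simp [hS, Real.volume_Ioc, ENNReal.toReal_ofReal h0t, h0t]
  set a : Fin n → ℝ := fun i => ∫ s in S, F i (τ s) with ha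
  set b : ℝ := ∫ s in S, G s with hb
  have hp' : ∀ i, 1 - p i = (1 - t) + a i := by
    intro i
    rw [hp i, intervalIntegral.integral_of_le h0t, ← hS,
      integral_sub (integrableOn_const hSfin : IntegrableOn (fun _ => (1:ℝ)) S volume).integrable (hintF i).integrable, hvolS]
    ring
  have hq' : 1 - q = (1 - t) + b := by
    rw [hq, intervalIntegral.integral_of_le h0t, ← hS,
      integral_sub (integrableOn_const hSfin : IntegrableOn (fun _ => (1:ℝ)) S volume).integrable hintG.integrable, hvolS]
    ring
  -- ENNReal quantities
  set c : ℝ≥0∞ := ENNReal.ofReal (1 - t) with hc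
  set A : Fin n → ℝ≥0∞ := fun i => ∫⁻ s in S, ENNReal.ofReal (F i (τ s)) with hA
  set B : ℝ≥0∞ := ∫⁻ s in S, ENNReal.ofReal (G s) with hB
  have hbound : ∀ (f : ℝ → ℝ), (∀ x, f x ≤ 1) →
      (∫⁻ s in S, ENNReal.ofReal (f s)) ≤ ENNReal.ofReal t := by
    intro f h1
    calc ∫⁻ s in S, ENNReal.ofReal (f s) ≤ ∫⁻ _ in S, 1 := by
          apply lintegral_mono
          intro x
          exact le_trans (ENNReal.ofReal_le_ofReal (h1 x)) (by simp)
      _ = volume S := by simp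
      _ = ENNReal.ofReal t := by simp [hS, Real.volume_Ioc]
  have hAfin : ∀ i, A i ≠ ⊤ :=
    fun i => ((hbound _ (fun x => hF1 i _)).trans_lt ENNReal.ofReal_lt_top).ne
  have hBfin : B ≠ ⊤ := ((hbound _ hG1).trans_lt ENNReal.ofReal_lt_top).ne
  have haA : ∀ i, a i = (A i).toReal := by
    intro i
    simp only [ha, hA]
    rw [integral_eq_lintegral_of_nonneg_ae
      (Filter.Eventually.of_forall fun x => hF0 i _) (hFim i).aestronglyMeasurable]
  have hbB : b = B.toReal := by
    simp only [hb, hB]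
    rw [integral_eq_lintegral_of_nonneg_ae
      (Filter.Eventually.of_forall hG0) hGm.aestronglyMeasurable]
  -- key inequality via Hölder with an atom
  have key : c + B ≤ ∏ i, (c + A i) ^ (1 / (n:ℝ)) := by
    have hBeq : B = ∫⁻ s in S, ∏ i, (ENNReal.ofReal (F i (τ s))) ^ (1/(n:ℝ)) := by
      rw [hB]
      refine lintegral_congr fun s => ?_
      have hr : (0:ℝ) ≤ 1/(n:ℝ) := one_div_nonneg.mpr (Nat.cast_nonneg n)
      simp only [hG]
      rw [← ENNReal.ofReal_rpow_of_nonneg (hP0 s) hr,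
        ENNReal.ofReal_prod_of_nonneg (fun i _ => hF0 i _),
        ENNReal.prod_rpow_of_nonneg hr]
    rw [hBeq]
    exact aux_holder hn _ c (fun i s => ENNReal.ofReal (F i (τ s)))
      (fun i => ENNReal.measurable_ofReal.comp (hFim i))
  have key2 : (c + B) ^ n ≤ ∏ i, (c + A i) := by
    calc (c + B) ^ n ≤ (∏ i, (c + A i) ^ (1 / (n:ℝ))) ^ n := pow_le_pow_left' key n
      _ = ∏ i, ((c + A i) ^ (1 / (n:ℝ))) ^ n := by rw [Finset.prod_pow]
      _ = ∏ i, (c + A i) := by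
          refine Finset.prod_congr rfl fun i _ => ?_
          rw [← ENNReal.rpow_natCast ((c + A i) ^ (1/(n:ℝ))) n, ← ENNReal.rpow_mul]
          rw [one_div, inv_mul_cancel₀ hn0, ENNReal.rpow_one]
  -- convert back to ℝ
  have hcAfin : ∀ i, c + A i ≠ ⊤ := fun i => ENNReal.add_ne_top.2 ⟨ENNReal.ofReal_ne_top, hAfin i⟩
  have hfinprod : (∏ i, (c + A i)) ≠ ⊤ :=
    ENNReal.prod_ne_top fun i _ => hcAfin i
  have := ENNReal.toReal_mono hfinprod key2
  rw [ENNReal.toReal_pow, ENNReal.toReal_prod] at this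
  have hcB : (c + B).toReal = 1 - q := by
    rw [ENNReal.toReal_add ENNReal.ofReal_ne_top hBfin,
      ENNReal.toReal_ofReal (by linarith : (0:ℝ) ≤ 1 - t), ← hbB, hq']
  have hcA : ∀ i, (c + A i).toReal = 1 - p i := by
    intro i
    rw [ENNReal.toReal_add ENNReal.ofReal_ne_top (hAfin i),
      ENNReal.toReal_ofReal (by linarith : (0:ℝ) ≤ 1 - t), ← haA, hp' i]
  rw [hcB] at this
  calc (1 - q) ^ n ≤ ∏ i, (c + A i).toReal := this
    _ = ∏ i, (1 - p i) := Finset.prod_congr rfl fun i _ => hcA i
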